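/- Let H ≤ S_n be a nontrivial subgroup with minimal degree m = m(H), and let c > 0 be a real number with n^c ≥ 2. Suppose that (a) every non-identity h ∈ H satisfies |h^{S_n}| ≥ n^{2(c + 1/7)·supp(h)}, and (b) for every k, the number of elements h ∈ H with supp(h) = k is at most n^{k/7}. Then D_H ≤ 2 · n^{-c·m}. -/

import Mathlib

open CategoryTheory Finset
open scoped Classical

section Helpers

open Module

lemma trace_pow_repr {W : Type*} [AddCommGroup W] [Module ℂ W] [FiniteDimensional ℂ W]
    (f : Module.End ℂ W) (k : ℕ) (hk : 0 < k) (hf : f ^ k = 1) :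
    ∃ (S : Finset ℂ) (d : ℂ → ℕ), (∀ μ ∈ S, μ ^ k = 1) ∧
      ∀ j : ℕ, LinearMap.trace ℂ W (f ^ j) = ∑ μ ∈ S, μ ^ j * (d μ : ℂ) := by
  have key : ∀ (j : ℕ) (μ : ℂ) (x : W), f x = μ • x → (f ^ j) x = μ ^ j • x := by
    intro j μ x hx
    induction j with
    | zero => simp
    | succ i ih => rw [pow_succ, Module.End.mul_apply, hx, map_smul, ih, smul_smul, ← pow_succ']
  have hss : f.IsSemisimple := by
    refine Module.End.isSemisimple_of_squarefree_aeval_eq_zero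
      (p := Polynomial.X ^ k - Polynomial.C 1) ?_ ?_
    · exact (Polynomial.separable_X_pow_sub_C (1:ℂ)
        (by exact_mod_cast Nat.cast_ne_zero.mpr hk.ne') one_ne_zero).squarefree
    · simp [map_pow, hf]
  have heig : ∀ μ : ℂ, f.eigenspace μ ≠ ⊥ → μ ^ k = 1 := by
    intro μ hμ
    obtain ⟨v, hv, hv0⟩ := Submodule.exists_mem_ne_zero_of_ne_bot hμ
    have hv' : f v = μ • v := Module.End.mem_eigenspace_iff.mp hv
    have h1 := key k μ v hv'
    rw [hf] at h1
    simp only [Module.End.one_apply] at h1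
    have h2 : (μ ^ k - 1) • v = 0 := by rw [sub_smul, one_smul, ← h1, sub_self]
    rcases smul_eq_zero.mp h2 with h | h
    · exact sub_eq_zero.mp h
    · exact absurd h hv0
  have hsub : {μ : ℂ | f.eigenspace μ ≠ ⊥} ⊆ ↑((Polynomial.nthRoots k (1:ℂ)).toFinset) := by
    intro μ hμ
    exact Finset.mem_coe.mpr (Multiset.mem_toFinset.mpr
      ((Polynomial.mem_nthRoots hk).mpr (heig μ hμ)))
  have hNfin : {μ : ℂ | f.eigenspace μ ≠ ⊥}.Finite :=
    Set.Finite.subset (Finset.finite_toSet _) hsub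
  have hind : iSupIndep f.eigenspace := by
    have := Module.End.independent_genEigenspace f 1
    convert this using 2
  have hsup : ⨆ μ, f.eigenspace μ = ⊤ := by
    have h1 := Module.End.iSup_maxGenEigenspace_eq_top f
    have h2 := hss.isFinitelySemisimple.maxGenEigenspace_eq_eigenspace
    simp_rw [← h2]; exact h1
  have hint : DirectSum.IsInternal f.eigenspace :=
    (DirectSum.isInternal_submodule_iff_iSupIndep_and_iSup_eq_top _).mpr ⟨hind, hsup⟩
  refine ⟨hNfin.toFinset, fun μ => finrank ℂ (f.eigenspace μ), ?_, ?_⟩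
  · intro μ hμ
    exact heig μ (by simpa using hμ)
  · intro j
    have hmaps : ∀ μ : ℂ, Set.MapsTo (f ^ j) (f.eigenspace μ) (f.eigenspace μ) := by
      intro μ x hx
      have hx' : f x = μ • x := Module.End.mem_eigenspace_iff.mp hx
      have hj := key j μ x hx'
      show (f ^ j) x ∈ f.eigenspace μ
      rw [Module.End.mem_eigenspace_iff, hj, map_smul, hx', smul_smul, smul_smul, mul_comm]
    rw [LinearMap.trace_eq_sum_trace_restrict' hint hNfin hmaps]
    refine Finset.sum_congr rfl fun μ hμ => ?_
    have hres : (f ^ j).restrict (hmaps μ) = (μ ^ j) • (1 : Module.End ℂ (f.eigenspace μ)) := by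
      ext x
      change (f ^ j) (x : W) = _
      have hx' : f (x : W) = μ • (x : W) := Module.End.mem_eigenspace_iff.mp x.2
      rw [key j μ (x : W) hx']
      simp
    rw [hres, map_smul, LinearMap.trace_one]
    simp [mul_comm]

lemma character_inv {G : Type} [Group G] [Fintype G] (V : FDRep ℂ G) (g : G) :
    V.character g⁻¹ = (starRingEnd ℂ) (V.character g) := by
  set k := orderOf g with hkdef
  have hk : 0 < k := orderOf_pos g
  set f : Module.End ℂ V := V.ρ g with hfdef
  have hf : f ^ k = 1 := by rw [hfdef, ← map_pow, pow_orderOf_eq_one, map_one]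
  obtain ⟨S, d, hroot, htr⟩ := trace_pow_repr f k hk hf
  have hconj : ∀ μ ∈ S, (starRingEnd ℂ) μ = μ ^ (k - 1) := by
    intro μ hμ
    have hμk : μ ^ k = 1 := hroot μ hμ
    have hns : Complex.normSq μ = 1 := by
      have h1 : (Complex.normSq μ : ℝ) ^ k = 1 := by
        have := congrArg Complex.normSq hμk
        rw [map_pow] at this; simpa using this
      have h0 : (0:ℝ) ≤ Complex.normSq μ := Complex.normSq_nonneg μ
      rcases (pow_eq_one_iff_cases.mp h1) with h | h | h
      · omega
      · exact h
      · nlinarith [h.1]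
    have hmc : μ * (starRingEnd ℂ) μ = 1 := by
      rw [Complex.mul_conj, hns]; simp
    have h2 : μ * μ ^ (k - 1) = 1 := by
      rw [← pow_succ', Nat.sub_add_cancel hk]; exact hμk
    have hinv1 : μ⁻¹ = (starRingEnd ℂ) μ := inv_eq_of_mul_eq_one_right hmc
    have hinv2 : μ⁻¹ = μ ^ (k - 1) := inv_eq_of_mul_eq_one_right h2
    rw [← hinv1, hinv2]
  have hginv : g⁻¹ = g ^ (k - 1) := by
    have h2 : g * g ^ (k - 1) = 1 := by
      rw [← pow_succ', Nat.sub_add_cancel hk]; exact pow_orderOf_eq_one g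
    exact (inv_eq_of_mul_eq_one_right h2).symm ▸ rfl
  have hchar1 : V.character g = ∑ μ ∈ S, μ * (d μ : ℂ) := by
    have := htr 1
    rw [pow_one] at this
    simpa [FDRep.character, hfdef] using this
  have hchar2 : V.character g⁻¹ = ∑ μ ∈ S, μ ^ (k - 1) * (d μ : ℂ) := by
    have h3 : V.character g⁻¹ = LinearMap.trace ℂ V (f ^ (k - 1)) := by
      rw [hginv]
      simp only [FDRep.character, hfdef, map_pow]
    rw [h3, htr (k - 1)]
  rw [hchar1, hchar2, map_sum]
  refine Finset.sum_congr rfl fun μ hμ => ?_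
  rw [map_mul, hconj μ hμ]
  congr 1
  simp

end Helpers

/-- `D_H`: the total variation distance between the weak quantum Fourier sampling
distributions for the hidden subgroup `H` and for the trivial subgroup, namely
`(1/|G|) · Σ_ρ d_ρ · |Σ_{h ∈ H, h ≠ e} χ_ρ(h)|`, where `ρ` runs over the family
of irreducible representations. -/
noncomputable def weakDist {G : Type} [Group G] [Fintype G] {ι : Type} [Fintype ι]
    (ρ : ι → FDRep ℂ G) (H : Subgroup G) : ℝ :=
  (Fintype.card G : ℝ)⁻¹ *
    ∑ i : ι, (Module.finrank ℂ (ρ i) : ℝ) *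
      ‖∑ h ∈ Finset.univ.filter (fun h : G => h ∈ H ∧ h ≠ 1), (ρ i).character h‖

/-- `ρ : ι → FDRep ℂ G` is a complete family of pairwise non-isomorphic irreducible
complex representations of `G` (one per isomorphism class). -/
def IsCompleteIrrepFamily {G : Type} [Group G] {ι : Type} (ρ : ι → FDRep ℂ G) : Prop :=
  (∀ i, Simple (ρ i)) ∧
  (∀ i j, Nonempty (ρ i ≅ ρ j) → i = j) ∧
  (∀ V : FDRep ℂ G, Simple V → ∃ i, Nonempty (ρ i ≅ V))

section Bessel

variable {G : Type} [Group G] [Fintype G] {ι : Type} [Fintype ι]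

/-- Characters, normalized by `1/√|G|`, as vectors in `ℂ^G`. -/
noncomputable def chVec (ρ : ι → FDRep ℂ G) (i : ι) : EuclideanSpace ℂ G :=
  WithLp.toLp 2 (fun g => ((Real.sqrt (Fintype.card G) : ℝ) : ℂ)⁻¹ * (ρ i).character g)

omit [Fintype ι] in
lemma chVec_orthonormal (ρ : ι → FDRep ℂ G) (hρ : IsCompleteIrrepFamily ρ) :
    Orthonormal ℂ (chVec ρ) := by
  rw [orthonormal_iff_ite]
  intro i j
  haveI := hρ.1 i
  haveI := hρ.1 j
  have key := FDRep.char_orthonormal (ρ j) (ρ i)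
  set s : ℂ := ((Real.sqrt (Fintype.card G) : ℝ) : ℂ) with hs
  have hss : s * s = (Fintype.card G : ℂ) := by
    rw [hs]
    norm_cast
    exact Real.mul_self_sqrt (Nat.cast_nonneg _)
  have hcalc : (inner ℂ (chVec ρ i) (chVec ρ j) : ℂ) =
      (Fintype.card G : ℂ)⁻¹ * ∑ g : G, (ρ j).character g * (ρ i).character g⁻¹ := by
    rw [PiLp.inner_apply, Finset.mul_sum]
    refine Finset.sum_congr rfl fun g _ => ?_
    simp only [chVec, RCLike.inner_apply]
    rw [character_inv (ρ i) g, map_mul, ← hss]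
    have hcs : (starRingEnd ℂ) s⁻¹ = s⁻¹ := by
      rw [hs, map_inv₀, Complex.conj_ofReal]
    rw [hcs]
    ring
  have hsmul : ((Fintype.card G : ℂ))⁻¹ * (∑ g : G, (ρ j).character g * (ρ i).character g⁻¹) =
      (Nat.card G : ℂ)⁻¹ * ∑ g : G, (ρ j).character g *
        (ρ i).character g⁻¹ := by
    rw [Nat.card_eq_fintype_card]
  rw [hcalc, hsmul, key]
  by_cases hij : i = j
  · subst hij
    simp [Nonempty.intro (Iso.refl (ρ i))]
  · have : ¬ Nonempty (ρ j ≅ ρ i) := fun ⟨e⟩ => hij (hρ.2.1 j i ⟨e⟩).symm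
    simp [hij, this]

lemma bessel_class (ρ : ι → FDRep ℂ G) (hρ : IsCompleteIrrepFamily ρ) (h : G) :
    (∑ i : ι, ‖(ρ i).character h‖ ^ 2) *
      ((Finset.univ.filter (fun g : G => g ∈ (ConjClasses.mk h).carrier)).card : ℝ)
      ≤ (Fintype.card G : ℝ) := by
  classical
  set C : Finset G := Finset.univ.filter (fun g : G => g ∈ (ConjClasses.mk h).carrier) with hC
  have hhC : h ∈ C := by
    simp [hC, ConjClasses.mem_carrier_mk]
  have hc1 : 1 ≤ C.card := Finset.card_pos.mpr ⟨h, hhC⟩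
  have hcpos : (0:ℝ) < (C.card : ℝ) := by exact_mod_cast hc1
  have hN : (0:ℝ) < (Fintype.card G : ℝ) := by exact_mod_cast Fintype.card_pos
  set x : EuclideanSpace ℂ G := WithLp.toLp 2 (fun g => if g ∈ C then (1:ℂ) else 0) with hx
  have hcharC : ∀ i : ι, ∀ g ∈ C, (ρ i).character g = (ρ i).character h := by
    intro i g hg
    have : g ∈ (ConjClasses.mk h).carrier := by simpa [hC] using hg
    rw [ConjClasses.mem_carrier_iff_mk_eq, ConjClasses.mk_eq_mk_iff_isConj] at this
    obtain ⟨b, hb⟩ := isConj_iff.mp this.symm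
    rw [← hb, FDRep.char_conj]
  set s : ℝ := Real.sqrt (Fintype.card G) with hs
  have hspos : 0 < s := Real.sqrt_pos.mpr hN
  have hinner : ∀ i : ι, (inner ℂ (chVec ρ i) x : ℂ) =
      (C.card : ℂ) * (s : ℂ)⁻¹ * (starRingEnd ℂ) ((ρ i).character h) := by
    intro i
    rw [PiLp.inner_apply]
    have : ∀ g : G, (inner ℂ (chVec ρ i g) (x g) : ℂ) =
        if g ∈ C then (s:ℂ)⁻¹ * (starRingEnd ℂ) ((ρ i).character g) else 0 := by
      intro g
      by_cases hg : g ∈ C <;>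
        simp [hx, hg, RCLike.inner_apply, chVec, hs, map_mul, map_inv₀, Complex.conj_ofReal]
    rw [Finset.sum_congr rfl (fun g _ => this g), Finset.sum_ite_mem, Finset.univ_inter]
    rw [Finset.sum_congr rfl (fun g hg => by rw [hcharC i g hg]), Finset.sum_const]
    simp [mul_comm, mul_assoc]
  have hnormx : ‖x‖ ^ 2 = (C.card : ℝ) := by
    rw [EuclideanSpace.norm_eq, Real.sq_sqrt (by positivity)]
    have : ∀ g : G, ‖x g‖ ^ 2 = if g ∈ C then (1:ℝ) else 0 := by
      intro g; by_cases hg : g ∈ C <;> simp [hx, hg]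
    rw [Finset.sum_congr rfl (fun g _ => this g), Finset.sum_ite_mem, Finset.univ_inter,
      Finset.sum_const]
    simp
  have hb := (chVec_orthonormal ρ hρ).sum_inner_products_le (s := Finset.univ) x
  rw [hnormx] at hb
  have hterm : ∀ i : ι, ‖(inner ℂ (chVec ρ i) x : ℂ)‖ ^ 2 =
      (C.card : ℝ)^2 * (Fintype.card G : ℝ)⁻¹ * ‖(ρ i).character h‖ ^ 2 := by
    intro i
    rw [hinner i, norm_mul, norm_mul, norm_inv, Complex.norm_natCast, Complex.norm_real,
      Real.norm_eq_abs, abs_of_pos hspos, RCLike.norm_conj, 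
      mul_pow, mul_pow, inv_pow, hs, Real.sq_sqrt hN.le]
  rw [Finset.sum_congr rfl (fun i _ => hterm i)] at hb
  rw [← Finset.mul_sum] at hb
  set X : ℝ := ∑ i : ι, ‖(ρ i).character h‖ ^ 2 with hX
  have key : X * (C.card : ℝ) =
      ((C.card : ℝ)^2 * (Fintype.card G : ℝ)⁻¹ * X) * ((Fintype.card G : ℝ) / C.card) := by
    field_simp
  rw [key]
  calc ((C.card : ℝ)^2 * (Fintype.card G : ℝ)⁻¹ * X) * ((Fintype.card G : ℝ) / C.card)
      ≤ (C.card : ℝ) * ((Fintype.card G : ℝ) / C.card) :=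
        mul_le_mul_of_nonneg_right hb (by positivity)
    _ = (Fintype.card G : ℝ) := by field_simp

lemma sum_sq_finrank_le (ρ : ι → FDRep ℂ G) (hρ : IsCompleteIrrepFamily ρ) :
    (∑ i : ι, (Module.finrank ℂ (ρ i) : ℝ) ^ 2) ≤ (Fintype.card G : ℝ) := by
  have hb := bessel_class ρ hρ (1 : G)
  have hcar : (Finset.univ.filter (fun g : G => g ∈ (ConjClasses.mk (1:G)).carrier)) = {1} := by
    ext g
    simp only [Finset.mem_filter, Finset.mem_univ, true_and, Finset.mem_singleton,
      ConjClasses.mem_carrier_iff_mk_eq, ConjClasses.mk_eq_mk_iff_isConj]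
    constructor
    · intro hcj; exact isConj_one_right.mp hcj.symm
    · rintro rfl; exact IsConj.refl 1
  rw [hcar] at hb
  simp only [Finset.card_singleton, Nat.cast_one, mul_one] at hb
  calc (∑ i : ι, (Module.finrank ℂ (ρ i) : ℝ) ^ 2)
      = ∑ i : ι, ‖(ρ i).character 1‖ ^ 2 := by
        refine Finset.sum_congr rfl fun i _ => ?_
        rw [FDRep.char_one]
        simp
    _ ≤ (Fintype.card G : ℝ) := hb

lemma sum_finrank_mul_char_le (ρ : ι → FDRep ℂ G) (hρ : IsCompleteIrrepFamily ρ) (h : G) :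
    ∑ i : ι, (Module.finrank ℂ (ρ i) : ℝ) * ‖(ρ i).character h‖ ≤
      (Fintype.card G : ℝ) /
        Real.sqrt ((Finset.univ.filter (fun g : G => g ∈ (ConjClasses.mk h).carrier)).card) := by
  classical
  set C : Finset G := Finset.univ.filter (fun g : G => g ∈ (ConjClasses.mk h).carrier) with hC
  have hhC : h ∈ C := by simp [hC, ConjClasses.mem_carrier_mk]
  have hcpos : (0:ℝ) < (C.card : ℝ) := by
    exact_mod_cast Finset.card_pos.mpr ⟨h, hhC⟩
  have hN : (0:ℝ) < (Fintype.card G : ℝ) := by exact_mod_cast Fintype.card_pos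
  set A : ℝ := ∑ i : ι, (Module.finrank ℂ (ρ i) : ℝ) * ‖(ρ i).character h‖ with hA
  have hAnn : 0 ≤ A := by
    rw [hA]; exact Finset.sum_nonneg fun i _ => by positivity
  have hcs : A ^ 2 ≤ (∑ i : ι, (Module.finrank ℂ (ρ i) : ℝ) ^ 2) *
      (∑ i : ι, ‖(ρ i).character h‖ ^ 2) :=
    Finset.sum_mul_sq_le_sq_mul_sq Finset.univ _ _
  have h1 := sum_sq_finrank_le ρ hρ
  have h2 : (∑ i : ι, ‖(ρ i).character h‖ ^ 2) ≤ (Fintype.card G : ℝ) / C.card := by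
    rw [le_div_iff₀ hcpos]
    exact bessel_class ρ hρ h
  have hsqnn : 0 ≤ ∑ i : ι, ‖(ρ i).character h‖ ^ 2 :=
    Finset.sum_nonneg fun i _ => by positivity
  have hdnn : 0 ≤ ∑ i : ι, (Module.finrank ℂ (ρ i) : ℝ) ^ 2 :=
    Finset.sum_nonneg fun i _ => by positivity
  have hA2 : A ^ 2 ≤ (Fintype.card G : ℝ) * ((Fintype.card G : ℝ) / C.card) := by
    calc A ^ 2 ≤ (∑ i : ι, (Module.finrank ℂ (ρ i) : ℝ) ^ 2) *
        (∑ i : ι, ‖(ρ i).character h‖ ^ 2) := hcs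
      _ ≤ (Fintype.card G : ℝ) * ((Fintype.card G : ℝ) / C.card) := by
          apply mul_le_mul h1 h2 hsqnn hN.le
  calc A = Real.sqrt (A ^ 2) := (Real.sqrt_sq hAnn).symm
    _ ≤ Real.sqrt ((Fintype.card G : ℝ) * ((Fintype.card G : ℝ) / C.card)) :=
        Real.sqrt_le_sqrt hA2
    _ = (Fintype.card G : ℝ) / Real.sqrt (C.card) := by
        rw [show (Fintype.card G : ℝ) * ((Fintype.card G : ℝ) / C.card) =
          (Fintype.card G : ℝ)^2 / C.card by ring]
        rw [Real.sqrt_div (by positivity) _, Real.sqrt_sq hN.le]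

end Bessel

set_option maxHeartbeats 2000000 in
/-- suppose `H ≤ S_n` is nontrivial with minimal degree `m`, `c > 0`
with `n^c ≥ 2`, every non-identity `h ∈ H` satisfies `|h^{S_n}| ≥ n^{2(c+1/7)·supp(h)}`,
and for every `k` the number of elements of `H` of support `k` is at most `n^{k/7}`.
Then `D_H ≤ 2 · n^{-c·m}`. -/
theorem stmt_17 {n : ℕ} {ι : Type} [Fintype ι]
    (ρ : ι → FDRep ℂ (Equiv.Perm (Fin n))) (hρ : IsCompleteIrrepFamily ρ)
    (H : Subgroup (Equiv.Perm (Fin n))) (hH : H ≠ ⊥)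
    (m : ℕ) (hm : IsLeast {k : ℕ | ∃ h ∈ H, h ≠ 1 ∧ h.support.card = k} m)
    (c : ℝ) (hc : 0 < c) (hn : 2 ≤ (n : ℝ) ^ c)
    (ha : ∀ h ∈ H, h ≠ 1 →
      (n : ℝ) ^ (2 * (c + 1 / 7) * (h.support.card : ℝ)) ≤
        (Nat.card (ConjClasses.mk h).carrier : ℝ))
    (hb : ∀ k : ℕ,
      (Nat.card {h : Equiv.Perm (Fin n) // h ∈ H ∧ h.support.card = k} : ℝ) ≤
        (n : ℝ) ^ ((k : ℝ) / 7)) :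
    weakDist ρ H ≤ 2 * (n : ℝ) ^ (-(c * (m : ℝ))) := by
  classical
  -- n ≥ 2
  have hn2 : 2 ≤ n := by
    by_contra hlt
    push_neg at hlt
    interval_cases n
    · rw [Nat.cast_zero, Real.zero_rpow hc.ne'] at hn; linarith
    · rw [Nat.cast_one, Real.one_rpow] at hn; linarith
  have npos : (0:ℝ) < (n:ℝ) := by positivity
  have hNpos : (0:ℝ) < (Fintype.card (Equiv.Perm (Fin n)) : ℝ) := by exact_mod_cast Fintype.card_pos
  set T : Finset (Equiv.Perm (Fin n)) := Finset.univ.filter (fun h : Equiv.Perm (Fin n) => h ∈ H ∧ h ≠ 1) with hT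
  have hsuppn : ∀ h : Equiv.Perm (Fin n), h.support.card ≤ n := fun h => by
    simpa using Finset.card_le_univ h.support
  -- conjugacy class cardinality rewriting
  have hcardeq : ∀ h : Equiv.Perm (Fin n), (Nat.card (ConjClasses.mk h).carrier : ℕ) =
      (Finset.univ.filter (fun g : Equiv.Perm (Fin n) => g ∈ (ConjClasses.mk h).carrier)).card := by
    intro h
    rw [Nat.card_eq_fintype_card, ← Set.toFinset_card]
    congr 1
    ext g
    simp [Set.mem_toFinset]
  -- Step A : weakDist ≤ ∑_{h∈T} (√|class h|)⁻¹
  set Cfun : Equiv.Perm (Fin n) → ℝ :=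
    fun h => ((Finset.univ.filter (fun g : Equiv.Perm (Fin n) => g ∈ (ConjClasses.mk h).carrier)).card : ℝ)
    with hCfun
  have hCfb : ∀ h : Equiv.Perm (Fin n), Cfun h =
      ((Finset.univ.filter (fun g : Equiv.Perm (Fin n) => g ∈ (ConjClasses.mk h).carrier)).card : ℝ) :=
    fun h => rfl
  have hCpos : ∀ h : Equiv.Perm (Fin n), 0 < Cfun h := by
    intro h
    rw [hCfb h]
    have : h ∈ Finset.univ.filter (fun g : Equiv.Perm (Fin n) => g ∈ (ConjClasses.mk h).carrier) := by
      simp [ConjClasses.mem_carrier_mk]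
    exact_mod_cast Finset.card_pos.mpr ⟨h, this⟩
  have stepA : weakDist ρ H ≤ ∑ h ∈ T, (Real.sqrt (Cfun h))⁻¹ := by
    have h1 : ∀ i : ι, ‖∑ h ∈ T, (ρ i).character h‖ ≤
        ∑ h ∈ T, ‖(ρ i).character h‖ := fun i => norm_sum_le _ _
    have h2 : ∑ i : ι, (Module.finrank ℂ (ρ i) : ℝ) * ‖∑ h ∈ T, (ρ i).character h‖
        ≤ ∑ h ∈ T, (Fintype.card (Equiv.Perm (Fin n)) : ℝ) / Real.sqrt (Cfun h) := by
      calc ∑ i : ι, (Module.finrank ℂ (ρ i) : ℝ) * ‖∑ h ∈ T, (ρ i).character h‖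
          ≤ ∑ i : ι, (Module.finrank ℂ (ρ i) : ℝ) *
            (∑ h ∈ T, ‖(ρ i).character h‖) := by
            refine Finset.sum_le_sum fun i _ => ?_
            exact mul_le_mul_of_nonneg_left (h1 i) (by positivity)
        _ = ∑ h ∈ T, ∑ i : ι, (Module.finrank ℂ (ρ i) : ℝ) *
            ‖(ρ i).character h‖ := by
            simp_rw [Finset.mul_sum]
            exact Finset.sum_comm
        _ ≤ ∑ h ∈ T, (Fintype.card (Equiv.Perm (Fin n)) : ℝ) / Real.sqrt (Cfun h) :=
            Finset.sum_le_sum fun h _ => sum_finrank_mul_char_le ρ hρ h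
    have h3 : weakDist ρ H ≤ (Fintype.card (Equiv.Perm (Fin n)) : ℝ)⁻¹ *
        ∑ h ∈ T, (Fintype.card (Equiv.Perm (Fin n)) : ℝ) / Real.sqrt (Cfun h) := by
      have heq : weakDist ρ H = (Fintype.card (Equiv.Perm (Fin n)) : ℝ)⁻¹ *
          ∑ i : ι, (Module.finrank ℂ (ρ i) : ℝ) *
            ‖∑ h ∈ T, (ρ i).character h‖ := by
        unfold weakDist
        congr!
      rw [heq]
      exact mul_le_mul_of_nonneg_left h2 (by positivity)
    refine h3.trans_eq ?_
    rw [Finset.mul_sum]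
    refine Finset.sum_congr rfl fun h _ => ?_
    rw [div_eq_mul_inv, ← mul_assoc, inv_mul_cancel₀ hNpos.ne', one_mul]
  -- Step B : pointwise bound by n^{-(c+1/7)·supp}
  have stepB : ∀ h ∈ T, (Real.sqrt (Cfun h))⁻¹ ≤
      (n:ℝ) ^ (-((c + 1/7) * (h.support.card : ℝ))) := by
    intro h hh
    rw [hT, Finset.mem_filter] at hh
    obtain ⟨-, hmem, hne⟩ := hh
    set a : ℝ := (c + 1/7) * (h.support.card : ℝ) with hadef
    have hxa : (n:ℝ) ^ (2 * (c + 1/7) * (h.support.card : ℝ)) ≤ Cfun h := by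
      have hcc : (Nat.card (ConjClasses.mk h).carrier : ℝ) = Cfun h := by
        rw [hCfb h]
        exact_mod_cast congrArg (Nat.cast (R := ℝ)) (hcardeq h)
      rw [← hcc]
      exact ha h hmem hne
    have hsplit : (n:ℝ) ^ (2 * (c + 1/7) * (h.support.card : ℝ)) =
        ((n:ℝ) ^ a) * ((n:ℝ) ^ a) := by
      rw [← Real.rpow_add npos]
      congr 1
      rw [hadef]; ring
    have hapos : 0 < (n:ℝ) ^ a := Real.rpow_pos_of_pos npos a
    have hsq : (n:ℝ) ^ a ≤ Real.sqrt (Cfun h) := by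
      have : Real.sqrt ((n:ℝ) ^ (2 * (c + 1/7) * (h.support.card : ℝ))) = (n:ℝ) ^ a := by
        rw [hsplit, Real.sqrt_mul_self hapos.le]
      rw [← this]
      exact Real.sqrt_le_sqrt hxa
    have := inv_anti₀ hapos hsq
    rwa [← Real.rpow_neg npos.le] at this
  -- Step C : sum of the bounds
  have stepC : ∑ h ∈ T, (n:ℝ) ^ (-((c + 1/7) * (h.support.card : ℝ))) ≤
      2 * (n : ℝ) ^ (-(c * (m : ℝ))) := by
    have hmap : ∀ h ∈ T, h.support.card ∈ Finset.range (n+1) := fun h _ =>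
      Finset.mem_range.mpr (Nat.lt_succ_of_le (hsuppn h))
    rw [← Finset.sum_fiberwise_of_maps_to hmap
      (fun h : Equiv.Perm (Fin n) => (n:ℝ) ^ (-((c + 1/7) * (h.support.card : ℝ))))]
    have hinner : ∀ k ∈ Finset.range (n+1),
        (∑ h ∈ T.filter (fun h : Equiv.Perm (Fin n) => h.support.card = k),
          (n:ℝ) ^ (-((c + 1/7) * (h.support.card : ℝ)))) =
        ((T.filter (fun h : Equiv.Perm (Fin n) => h.support.card = k)).card : ℝ) *
          (n:ℝ) ^ (-((c + 1/7) * (k : ℝ))) := by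
      intro k _
      rw [Finset.sum_congr rfl (fun h hh => by
        rw [(Finset.mem_filter.mp hh).2]), Finset.sum_const, nsmul_eq_mul]
    rw [Finset.sum_congr rfl hinner]
    have hterm : ∀ k ∈ Finset.range (n+1),
        ((T.filter (fun h : Equiv.Perm (Fin n) => h.support.card = k)).card : ℝ) *
          (n:ℝ) ^ (-((c + 1/7) * (k : ℝ))) ≤
        (if m ≤ k then (n:ℝ) ^ (-(c * (k:ℝ))) else 0) := by
      intro k _
      by_cases hmk : m ≤ k
      · rw [if_pos hmk]
        have hsub : T.filter (fun h : Equiv.Perm (Fin n) => h.support.card = k) ⊆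
            Finset.univ.filter (fun h : Equiv.Perm (Fin n) => h ∈ H ∧ h.support.card = k) := by
          intro h hh
          rw [Finset.mem_filter] at hh ⊢
          rw [hT, Finset.mem_filter] at hh
          exact ⟨Finset.mem_univ h, hh.1.2.1, hh.2⟩
        have hcard : ((T.filter (fun h : Equiv.Perm (Fin n) => h.support.card = k)).card : ℝ) ≤
            (n:ℝ) ^ ((k:ℝ)/7) := by
          refine le_trans ?_ (hb k)
          have : (Nat.card {h : Equiv.Perm (Fin n) // h ∈ H ∧ h.support.card = k} : ℕ) =
              (Finset.univ.filter (fun h : Equiv.Perm (Fin n) => h ∈ H ∧ h.support.card = k)).card := by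
            rw [Nat.card_eq_fintype_card, Fintype.card_subtype]
          rw [show (Nat.card {h : Equiv.Perm (Fin n) // h ∈ H ∧ h.support.card = k} : ℝ) =
            ((Finset.univ.filter (fun h : Equiv.Perm (Fin n) => h ∈ H ∧ h.support.card = k)).card : ℝ) by
              exact_mod_cast congrArg (Nat.cast (R := ℝ)) this]
          exact_mod_cast Finset.card_le_card hsub
        calc ((T.filter (fun h : Equiv.Perm (Fin n) => h.support.card = k)).card : ℝ) *
              (n:ℝ) ^ (-((c + 1/7) * (k : ℝ)))
            ≤ (n:ℝ) ^ ((k:ℝ)/7) * (n:ℝ) ^ (-((c + 1/7) * (k : ℝ))) :=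
              mul_le_mul_of_nonneg_right hcard (Real.rpow_nonneg npos.le _)
          _ = (n:ℝ) ^ (-(c * (k:ℝ))) := by
              rw [← Real.rpow_add npos]; congr 1; ring
      · rw [if_neg hmk]
        have hempty : T.filter (fun h : Equiv.Perm (Fin n) => h.support.card = k) = ∅ := by
          rw [Finset.filter_eq_empty_iff]
          intro h hh hk
          rw [hT, Finset.mem_filter] at hh
          exact hmk (hk ▸ hm.2 ⟨h, hh.2.1, hh.2.2, rfl⟩)
        rw [hempty]
        simp
    refine le_trans (Finset.sum_le_sum hterm) ?_
    rw [← Finset.sum_filter]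
    -- geometric series bound
    set r : ℝ := (n:ℝ) ^ (-c) with hr
    have hr0 : 0 ≤ r := Real.rpow_nonneg npos.le _
    have hrhalf : r ≤ 1/2 := by
      rw [hr, Real.rpow_neg npos.le]
      rw [show (1:ℝ)/2 = 2⁻¹ by norm_num]
      exact inv_anti₀ (by norm_num) hn
    have hgeom : ∑ j ∈ Finset.range (n+1), r ^ j ≤ 2 := by
      have hgs := geom_sum_mul r (n+1)
      have hS0 : 0 ≤ ∑ j ∈ Finset.range (n+1), r ^ j :=
        Finset.sum_nonneg fun j _ => pow_nonneg hr0 j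
      nlinarith [pow_nonneg hr0 (n+1)]
    have hsplit2 : ∀ k ∈ (Finset.range (n+1)).filter (fun k => m ≤ k),
        (n:ℝ) ^ (-(c * (k:ℝ))) = (n:ℝ) ^ (-(c * (m:ℝ))) * r ^ (k - m) := by
      intro k hk
      have hmk : m ≤ k := (Finset.mem_filter.mp hk).2
      have hcast : ((k - m : ℕ) : ℝ) = (k:ℝ) - (m:ℝ) := by
        rw [Nat.cast_sub hmk]
      rw [hr, ← Real.rpow_natCast ((n:ℝ) ^ (-c)) (k - m), ← Real.rpow_mul npos.le,
        ← Real.rpow_add npos]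
      congr 1
      rw [hcast]; ring
    rw [Finset.sum_congr rfl hsplit2, ← Finset.mul_sum]
    have hre : ∑ k ∈ (Finset.range (n+1)).filter (fun k => m ≤ k), r ^ (k - m) ≤
        ∑ j ∈ Finset.range (n+1), r ^ j := by
      have hinj : ∀ x ∈ (Finset.range (n+1)).filter (fun k => m ≤ k),
          ∀ y ∈ (Finset.range (n+1)).filter (fun k => m ≤ k), x - m = y - m → x = y := by
        intro x hx y hy hxy
        have hx' := (Finset.mem_filter.mp hx).2
        have hy' := (Finset.mem_filter.mp hy).2
        omega
      rw [← Finset.sum_image hinj]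
      refine Finset.sum_le_sum_of_subset_of_nonneg ?_ (fun j _ _ => pow_nonneg hr0 j)
      intro j hj
      rw [Finset.mem_image] at hj
      obtain ⟨k, hk, rfl⟩ := hj
      have := Finset.mem_range.mp (Finset.mem_filter.mp hk).1
      exact Finset.mem_range.mpr (by omega)
    calc (n:ℝ) ^ (-(c * (m:ℝ))) *
          ∑ k ∈ (Finset.range (n+1)).filter (fun k => m ≤ k), r ^ (k - m)
        ≤ (n:ℝ) ^ (-(c * (m:ℝ))) * 2 := by
          refine mul_le_mul_of_nonneg_left (hre.trans hgeom) (Real.rpow_nonneg npos.le _)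
      _ = 2 * (n : ℝ) ^ (-(c * (m : ℝ))) := mul_comm _ _
  calc weakDist ρ H ≤ ∑ h ∈ T, (Real.sqrt (Cfun h))⁻¹ := stepA
    _ ≤ ∑ h ∈ T, (n:ℝ) ^ (-((c + 1/7) * (h.support.card : ℝ))) :=
        Finset.sum_le_sum stepB
    _ ≤ 2 * (n : ℝ) ^ (-(c * (m : ℝ))) := stepC
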